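/- Let n be a positive integer, let J : ℝⁿ → ℝ be differentiable with J(z) ≥ 0 for all z, and let α : ℝ → ℝ be an extended class K function. Let x : ℝ → ℝⁿ be differentiable and satisfy, for all t, x'(t) = (α(-J(x(t))) / (1 + ‖∇J(x(t))‖²)) • ∇J(x(t)). Then for all t, the derivative of t ↦ J(x(t)) equals α(-J(x(t)))·‖∇J(x(t))‖² / (1 + ‖∇J(x(t))‖²); in particular this derivative is ≤ 0, it is strictly negative whenever ∇J(x(t)) ≠ 0 and J(x(t)) > 0, and it is zero whenever ∇J(x(t)) = 0. -/

import Mathlib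

open Real

/-- Cost evolution under the relaxed minimum-energy input (Proposition 1): if
`x' t = (α (-J (x t)) / (1 + ‖∇J (x t)‖²)) • ∇J (x t)`, then
`(d/dt) J (x t) = α (-J (x t)) ‖∇J (x t)‖² / (1 + ‖∇J (x t)‖²)`; in particular
the derivative is nonpositive, strictly negative when `∇J (x t) ≠ 0` and
`J (x t) > 0`, and zero when `∇J (x t) = 0`. -/
theorem cost_evolution_relaxed
    (n : ℕ) (hn : 0 < n)
    (J : EuclideanSpace ℝ (Fin n) → ℝ) (hJdiff : Differentiable ℝ J)
    (hJnn : ∀ z : EuclideanSpace ℝ (Fin n), 0 ≤ J z)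
    (α : ℝ → ℝ) (hαcont : Continuous α) (hαmono : StrictMono α) (hα0 : α 0 = 0)
    (x : ℝ → EuclideanSpace ℝ (Fin n)) (hx : Differentiable ℝ x)
    (hode : ∀ t : ℝ, deriv x t
      = (α (-(J (x t))) / (1 + ‖gradient J (x t)‖ ^ 2)) • gradient J (x t)) :
    ∀ t : ℝ,
      deriv (fun s => J (x s)) t
        = α (-(J (x t))) * ‖gradient J (x t)‖ ^ 2 / (1 + ‖gradient J (x t)‖ ^ 2) ∧
      deriv (fun s => J (x s)) t ≤ 0 ∧
      (gradient J (x t) ≠ 0 → 0 < J (x t) → deriv (fun s => J (x s)) t < 0) ∧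
      (gradient J (x t) = 0 → deriv (fun s => J (x s)) t = 0) := by
  intro t
  set g := gradient J (x t) with hg
  have hden : (0:ℝ) < 1 + ‖g‖ ^ 2 := by positivity
  have hgrad : HasGradientAt J g (x t) := (hJdiff (x t)).hasGradientAt
  have hxd : HasDerivAt x (deriv x t) t := (hx t).hasDerivAt
  have hcomp : HasDerivAt (fun s => J (x s))
      (inner ℝ g (deriv x t) : ℝ) t := by
    have := hgrad.hasFDerivAt.comp_hasDerivAt t hxd
    simp [InnerProductSpace.toDual_apply_apply] at this
    exact this
  have hderiv : deriv (fun s => J (x s)) t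
      = α (-(J (x t))) * ‖g‖ ^ 2 / (1 + ‖g‖ ^ 2) := by
    rw [hcomp.deriv, hode t, real_inner_smul_right, real_inner_self_eq_norm_sq]
    ring
  have hαle : α (-(J (x t))) ≤ 0 := by
    have := hαmono.monotone (neg_nonpos.mpr (hJnn (x t)))
    simpa [hα0] using this
  refine ⟨hderiv, ?_, ?_, ?_⟩
  · rw [hderiv]
    apply div_nonpos_of_nonpos_of_nonneg _ hden.le
    exact mul_nonpos_of_nonpos_of_nonneg hαle (by positivity)
  · intro hgne hJpos
    rw [hderiv]
    have hαlt : α (-(J (x t))) < 0 := by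
      have := hαmono (show -(J (x t)) < 0 by linarith)
      simpa [hα0] using this
    have hgpos : 0 < ‖g‖ ^ 2 := pow_pos (norm_pos_iff.mpr hgne) 2
    exact div_neg_of_neg_of_pos (mul_neg_of_neg_of_pos hαlt hgpos) hden
  · intro h0
    rw [hderiv, hg] at *
    rw [h0]
    simp
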